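/- (Energy dissipation for the two-dimensional dimensionally-split scheme S1.) Let N ≥ 2, Δx, Δy, Δt > 0, H : ℝ → ℝ convex and differentiable, V ∈ ℝ^{N×N}, and w : ℤ² → ℝ with w(p,q) = w(−p,q) = w(p,−q). Suppose ρⁿ, ρ^{n+1/2}, ρⁿ⁺¹, ρ**, ρ*** ∈ ℝ^{N×N} satisfy the split S1 scheme: Step 1 (x-direction): ξ^{1/2}_{ij} = H'(ρ^{n+1/2}_{ij}) + V_{ij} + ΔxΔy·∑_{k,l=1}^{N} w(i−k,j−l)ρ**_{kl}; u_{i+1/2,j} = −(ξ^{1/2}_{i+1,j} − ξ^{1/2}_{ij})/Δx; F_{i+1/2,j} = ρᴱ_{ij}u_{i+1/2,j}⁺ + ρᵂ_{i+1,j}u_{i+1/2,j}⁻, where ρᴱ, ρᵂ are the row-wise second-order minmod reconstructions (θ = 2, mesh Δx) of ρⁿ; F_{1/2,j} = F_{N+1/2,j} = 0; ρ^{n+1/2}_{ij} = ρⁿ_{ij} − (Δt/Δx)(F_{i+1/2,j} − F_{i−1/2,j}). Step 2 (y-direction): ξ^{1}_{ij} = H'(ρⁿ⁺¹_{ij}) +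 V_{ij} + ΔxΔy·∑_{k,l} w(i−k,j−l)ρ***_{kl}; v_{i,j+1/2} = −(ξ^{1}_{i,j+1} − ξ^{1}_{ij})/Δy; G_{i,j+1/2} = ρᴺ_{ij}v_{i,j+1/2}⁺ + ρˢ_{i,j+1}v_{i,j+1/2}⁻, where ρᴺ, ρˢ are the column-wise second-order minmod reconstructions (θ = 2, mesh Δy) of ρ^{n+1/2}; G_{i,1/2} = G_{i,N+1/2} = 0; ρⁿ⁺¹_{ij} = ρ^{n+1/2}_{ij} − (Δt/Δy)(G_{i,j+1/2} − G_{i,j−1/2}). Assume ρⁿ_{ij} ≥ 0 for all i,j and the CFL conditions 2Δt·max(u_{i+1/2,j}⁺, −u_{i+1/2,j}⁻) ≤ Δx and 2Δt·max(v_{i,j+1/2}⁺, −v_{i,j+1/2}⁻) ≤ Δy at every interface. If one of the following holds: (i) ρ** = (ρⁿ + ρ^{n+1/2})/2 and ρ*** = (ρ^{n+1/2} + ρⁿ⁺¹)/2; (ii) ρ** = ρⁿ, ρ*** = ρ^{n+1/2}, and the kernel w is negative definite; (iii) ρ** = ρ^{n+1/2}, ρ*** = ρⁿ⁺¹, and the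 kernel w is positive definite; then E_Δ(ρⁿ⁺¹) ≤ E_Δ(ρⁿ). -/

import Mathlib

/-- The minmod limiter: `min` if all arguments are positive, `max` if all are negative,
and `0` otherwise. -/
noncomputable def minmod3 (a b c : ℝ) : ℝ :=
  if 0 < a ∧ 0 < b ∧ 0 < c then min a (min b c)
  else if a < 0 ∧ b < 0 ∧ c < 0 then max a (max b c)
  else 0

/-- The minmod mslope (θ = 2, mesh `dx`) of a vector `ρ` indexed by `1,…,N`:
interior cells `2 ≤ i ≤ N−1` use the minmod limiter; the first and last cells get `0`. -/
noncomputable def mslope (N : ℕ) (dx : ℝ) (ρ : ℕ → ℝ) (i : ℕ) : ℝ :=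
  if 2 ≤ i ∧ i ≤ N - 1 then
    minmod3 (2 * (ρ (i + 1) - ρ i) / dx)
      ((ρ (i + 1) - ρ (i - 1)) / (2 * dx))
      (2 * (ρ i - ρ (i - 1)) / dx)
  else 0

/-- East reconstruction: `ρᴱ_i = ρ_i + (dx/2)·σ_i`. -/
noncomputable def recE (N : ℕ) (dx : ℝ) (ρ : ℕ → ℝ) (i : ℕ) : ℝ :=
  ρ i + dx / 2 * mslope N dx ρ i

/-- West reconstruction: `ρᵂ_i = ρ_i − (dx/2)·σ_i`. -/
noncomputable def recW (N : ℕ) (dx : ℝ) (ρ : ℕ → ℝ) (i : ℕ) : ℝ :=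
  ρ i - dx / 2 * mslope N dx ρ i

/-- Positive part `z⁺ = max(z,0)`. -/
noncomputable def pospart (z : ℝ) : ℝ := max z 0

/-- Negative part `z⁻ = min(z,0)`. -/
noncomputable def negpart (z : ℝ) : ℝ := min z 0

/-- The two-dimensional discrete free energy
`E_Δ(ρ) = ΔxΔy·(∑ H(ρ_{ij}) + ∑ V_{ij}ρ_{ij} + (ΔxΔy/2)·∑ w(i−k,j−l)ρ_{ij}ρ_{kl})`. -/
noncomputable def Edisc2 (N : ℕ) (dx dy : ℝ) (H : ℝ → ℝ) (V : ℕ → ℕ → ℝ)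
    (w : ℤ → ℤ → ℝ) (ρ : ℕ → ℕ → ℝ) : ℝ :=
  dx * dy * ((∑ i ∈ Finset.Icc 1 N, ∑ j ∈ Finset.Icc 1 N, H (ρ i j))
    + (∑ i ∈ Finset.Icc 1 N, ∑ j ∈ Finset.Icc 1 N, V i j * ρ i j)
    + dx * dy / 2 * ∑ i ∈ Finset.Icc 1 N, ∑ j ∈ Finset.Icc 1 N,
        ∑ k ∈ Finset.Icc 1 N, ∑ l ∈ Finset.Icc 1 N,
          w ((i : ℤ) - (k : ℤ)) ((j : ℤ) - (l : ℤ)) * ρ i j * ρ k l)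

/-- The kernel `w` is negative definite: `∑ w(i−k,j−l)(a_{ij}−b_{ij})(a_{kl}−b_{kl}) ≤ 0`
for all matrices `a, b` with nonnegative entries. -/
def NegDefKer2 (N : ℕ) (w : ℤ → ℤ → ℝ) : Prop :=
  ∀ a b : ℕ → ℕ → ℝ,
    (∀ i j, 1 ≤ i → i ≤ N → 1 ≤ j → j ≤ N → 0 ≤ a i j) →
    (∀ i j, 1 ≤ i → i ≤ N → 1 ≤ j → j ≤ N → 0 ≤ b i j) →
    ∑ i ∈ Finset.Icc 1 N, ∑ j ∈ Finset.Icc 1 N,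
      ∑ k ∈ Finset.Icc 1 N, ∑ l ∈ Finset.Icc 1 N,
        w ((i : ℤ) - (k : ℤ)) ((j : ℤ) - (l : ℤ))
          * (a i j - b i j) * (a k l - b k l) ≤ 0

/-- The kernel `w` is positive definite: `∑ w(i−k,j−l)(a_{ij}−b_{ij})(a_{kl}−b_{kl}) ≥ 0`
for all matrices `a, b` with nonnegative entries. -/
def PosDefKer2 (N : ℕ) (w : ℤ → ℤ → ℝ) : Prop :=
  ∀ a b : ℕ → ℕ → ℝ,
    (∀ i j, 1 ≤ i → i ≤ N → 1 ≤ j → j ≤ N → 0 ≤ a i j) →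
    (∀ i j, 1 ≤ i → i ≤ N → 1 ≤ j → j ≤ N → 0 ≤ b i j) →
    0 ≤ ∑ i ∈ Finset.Icc 1 N, ∑ j ∈ Finset.Icc 1 N,
      ∑ k ∈ Finset.Icc 1 N, ∑ l ∈ Finset.Icc 1 N,
        w ((i : ℤ) - (k : ℤ)) ((j : ℤ) - (l : ℤ))
          * (a i j - b i j) * (a k l - b k l)

lemma minmod3_cases (a b c : ℝ) :
    minmod3 a b c = 0 ∨
    (0 ≤ minmod3 a b c ∧ minmod3 a b c ≤ a ∧ minmod3 a b c ≤ c) ∨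
    (minmod3 a b c ≤ 0 ∧ a ≤ minmod3 a b c ∧ c ≤ minmod3 a b c) := by
  unfold minmod3
  split_ifs with h1 h2
  · exact Or.inr (Or.inl ⟨le_of_lt (lt_min h1.1 (lt_min h1.2.1 h1.2.2)), min_le_left _ _,
      (min_le_right _ _).trans (min_le_right _ _)⟩)
  · exact Or.inr (Or.inr ⟨le_of_lt (max_lt h2.1 (max_lt h2.2.1 h2.2.2)), le_max_left _ _,
      le_trans (le_max_right _ _) (le_max_right _ _)⟩)
  · exact Or.inl rfl

lemma recE_add_recW (N : ℕ) (dx : ℝ) (ρ : ℕ → ℝ) (i : ℕ) :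
    recE N dx ρ i + recW N dx ρ i = 2 * ρ i := by
  unfold recE recW; ring

lemma recE_nonneg (N : ℕ) {dx : ℝ} (hdx : 0 < dx) (ρ : ℕ → ℝ) (i : ℕ)
    (h0 : 0 ≤ ρ i) (h1 : 2 ≤ i → i ≤ N - 1 → 0 ≤ ρ (i + 1)) : 0 ≤ recE N dx ρ i := by
  unfold recE mslope
  split_ifs with h
  case neg => simpa using h0
  case pos =>
  replace h1 := h1 h.1 h.2
  · rcases minmod3_cases (2 * (ρ (i + 1) - ρ i) / dx)
      ((ρ (i + 1) - ρ (i - 1)) / (2 * dx))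
      (2 * (ρ i - ρ (i - 1)) / dx) with h3 | h3 | h3
    · rw [h3]; simpa using h0
    · have : 0 ≤ dx / 2 * _ := mul_nonneg (by positivity) h3.1
      linarith
    · have hb := h3.2.1
      have : dx / 2 * (2 * (ρ (i + 1) - ρ i) / dx) ≤ dx / 2 * _ :=
        mul_le_mul_of_nonneg_left hb (by positivity)
      have heq : dx / 2 * (2 * (ρ (i + 1) - ρ i) / dx) = ρ (i + 1) - ρ i := by
        field_simp
      linarith

lemma recW_nonneg (N : ℕ) {dx : ℝ} (hdx : 0 < dx) (ρ : ℕ → ℝ) (i : ℕ)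
    (h0 : 0 ≤ ρ i) (h1 : 2 ≤ i → i ≤ N - 1 → 0 ≤ ρ (i - 1)) : 0 ≤ recW N dx ρ i := by
  unfold recW mslope
  split_ifs with h
  case neg => simpa using h0
  case pos =>
  replace h1 := h1 h.1 h.2
  · rcases minmod3_cases (2 * (ρ (i + 1) - ρ i) / dx)
      ((ρ (i + 1) - ρ (i - 1)) / (2 * dx))
      (2 * (ρ i - ρ (i - 1)) / dx) with h3 | h3 | h3
    · rw [h3]; simpa using h0
    · have hb := h3.2.2
      have : dx / 2 * _ ≤ dx / 2 * (2 * (ρ i - ρ (i - 1)) / dx) :=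
        mul_le_mul_of_nonneg_left hb (by positivity)
      have heq : dx / 2 * (2 * (ρ i - ρ (i - 1)) / dx) = ρ i - ρ (i - 1) := by
        field_simp
      linarith
    · have : dx / 2 * _ ≤ 0 := mul_nonpos_of_nonneg_of_nonpos (by positivity) h3.1
      linarith

lemma pospart_nonneg (z : ℝ) : 0 ≤ pospart z := le_max_right _ _
lemma negpart_nonpos (z : ℝ) : negpart z ≤ 0 := min_le_right _ _
lemma pospart_mul_self (z : ℝ) : pospart z * z = pospart z * pospart z := by
  unfold pospart; rcases le_total z 0 with h | h
  · rw [max_eq_right h]; ring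
  · rw [max_eq_left h]
lemma negpart_mul_self (z : ℝ) : negpart z * z = negpart z * negpart z := by
  unfold negpart; rcases le_total z 0 with h | h
  · rw [min_eq_left h]
  · rw [min_eq_right h]; ring

lemma convex_tangent {H : ℝ → ℝ} (hc : ConvexOn ℝ Set.univ H) (hd : Differentiable ℝ H)
    (x y : ℝ) : H y - H x ≤ deriv H y * (y - x) := by
  rcases lt_trichotomy x y with h | h | h
  · have hs := hc.slope_le_deriv (Set.mem_univ x) (Set.mem_univ y) h (hd y)
    rw [slope_def_field] at hs
    have h' : 0 < y - x := by linarith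
    have := mul_le_mul_of_nonneg_right hs h'.le
    rw [div_mul_cancel₀] at this
    · linarith
    · exact h'.ne'
  · subst h; simp
  · have hs := hc.deriv_le_slope (Set.mem_univ y) (Set.mem_univ x) h (hd y)
    rw [slope_def_field] at hs
    have h' : 0 < x - y := by linarith
    have := mul_le_mul_of_nonneg_right hs h'.le
    rw [div_mul_cancel₀] at this
    · nlinarith
    · exact h'.ne'
open Finset in
lemma abel_sum : ∀ (n : ℕ), 1 ≤ n → ∀ (ξ F : ℕ → ℝ),
    ∑ i ∈ Icc 1 n, ξ i * (F i - F (i - 1)) =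
      ξ n * F n - ξ 1 * F 0 + ∑ i ∈ Icc 1 (n - 1), (ξ i - ξ (i + 1)) * F i := by
  intro n hn
  induction n, hn using Nat.le_induction with
  | base => intro ξ F; simp; ring
  | succ m hm ih =>
    intro ξ F
    obtain ⟨p, rfl⟩ : ∃ p, m = p + 1 := ⟨m - 1, by omega⟩
    rw [Finset.sum_Icc_succ_top (by omega : 1 ≤ p + 1 + 1)]
    rw [ih ξ F]
    have h1 : p + 1 + 1 - 1 = p + 1 := by omega
    have h2 : p + 1 - 1 = p := by omega
    rw [h1, h2]
    rw [Finset.sum_Icc_succ_top (by omega : 1 ≤ p + 1) (fun i => (ξ i - ξ (i + 1)) * F i)]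
    ring

open Finset in
lemma sbp (N : ℕ) (hN : 1 ≤ N) (ξ F : ℕ → ℝ) (hF0 : F 0 = 0) (hFN : F N = 0) :
    ∑ i ∈ Icc 1 N, ξ i * (F i - F (i - 1)) =
      ∑ i ∈ Icc 1 (N - 1), (ξ i - ξ (i + 1)) * F i := by
  rw [abel_sum N hN ξ F, hF0, hFN]; ring
open Finset

lemma sum4_comm (s t u v : Finset ℕ) (f : ℕ → ℕ → ℕ → ℕ → ℝ) :
    (∑ i ∈ s, ∑ j ∈ t, ∑ k ∈ u, ∑ l ∈ v, f i j k l)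
      = ∑ k ∈ u, ∑ l ∈ v, ∑ i ∈ s, ∑ j ∈ t, f i j k l :=
  calc (∑ i ∈ s, ∑ j ∈ t, ∑ k ∈ u, ∑ l ∈ v, f i j k l)
      = ∑ i ∈ s, ∑ k ∈ u, ∑ j ∈ t, ∑ l ∈ v, f i j k l :=
        Finset.sum_congr rfl fun i _ => Finset.sum_comm
    _ = ∑ k ∈ u, ∑ i ∈ s, ∑ j ∈ t, ∑ l ∈ v, f i j k l := Finset.sum_comm
    _ = ∑ k ∈ u, ∑ i ∈ s, ∑ l ∈ v, ∑ j ∈ t, f i j k l :=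
        Finset.sum_congr rfl fun k _ => Finset.sum_congr rfl fun i _ => Finset.sum_comm
    _ = ∑ k ∈ u, ∑ l ∈ v, ∑ i ∈ s, ∑ j ∈ t, f i j k l :=
        Finset.sum_congr rfl fun k _ => Finset.sum_comm

lemma sum4_swap_pairs (s t u v : Finset ℕ) (f : ℕ → ℕ → ℕ → ℕ → ℝ) :
    (∑ i ∈ s, ∑ j ∈ t, ∑ k ∈ u, ∑ l ∈ v, f i j k l)
      = ∑ j ∈ t, ∑ i ∈ s, ∑ l ∈ v, ∑ k ∈ u, f i j k l :=
  calc (∑ i ∈ s, ∑ j ∈ t, ∑ k ∈ u, ∑ l ∈ v, f i j k l)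
      = ∑ j ∈ t, ∑ i ∈ s, ∑ k ∈ u, ∑ l ∈ v, f i j k l := Finset.sum_comm
    _ = ∑ j ∈ t, ∑ i ∈ s, ∑ l ∈ v, ∑ k ∈ u, f i j k l :=
        Finset.sum_congr rfl fun j _ => Finset.sum_congr rfl fun i _ => Finset.sum_comm

/-- The discrete interaction form. -/
noncomputable def Qf (N : ℕ) (w : ℤ → ℤ → ℝ) (a b : ℕ → ℕ → ℝ) : ℝ :=
  ∑ i ∈ Icc 1 N, ∑ j ∈ Icc 1 N, ∑ k ∈ Icc 1 N, ∑ l ∈ Icc 1 N,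
    w ((i : ℤ) - (k : ℤ)) ((j : ℤ) - (l : ℤ)) * a i j * b k l

lemma sum4_congr {N : ℕ} {f g : ℕ → ℕ → ℕ → ℕ → ℝ}
    (h : ∀ i j k l, 1 ≤ i → i ≤ N → 1 ≤ j → j ≤ N → 1 ≤ k → k ≤ N → 1 ≤ l → l ≤ N →
        f i j k l = g i j k l) :
    (∑ i ∈ Icc 1 N, ∑ j ∈ Icc 1 N, ∑ k ∈ Icc 1 N, ∑ l ∈ Icc 1 N, f i j k l)
      = ∑ i ∈ Icc 1 N, ∑ j ∈ Icc 1 N, ∑ k ∈ Icc 1 N, ∑ l ∈ Icc 1 N, g i j k l := by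
  refine Finset.sum_congr rfl fun i hi => Finset.sum_congr rfl fun j hj =>
    Finset.sum_congr rfl fun k hk => Finset.sum_congr rfl fun l hl => ?_
  rw [Finset.mem_Icc] at hi hj hk hl
  exact h i j k l hi.1 hi.2 hj.1 hj.2 hk.1 hk.2 hl.1 hl.2

lemma Qf_congr {N : ℕ} {w : ℤ → ℤ → ℝ} {a a' b b' : ℕ → ℕ → ℝ}
    (ha : ∀ i j, 1 ≤ i → i ≤ N → 1 ≤ j → j ≤ N → a i j = a' i j)
    (hb : ∀ i j, 1 ≤ i → i ≤ N → 1 ≤ j → j ≤ N → b i j = b' i j) :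
    Qf N w a b = Qf N w a' b' := by
  unfold Qf
  exact sum4_congr fun i j k l h1 h2 h3 h4 h5 h6 h7 h8 => by
    rw [ha i j h1 h2 h3 h4, hb k l h5 h6 h7 h8]

lemma Qf_symm {N : ℕ} {w : ℤ → ℤ → ℝ}
    (hw1 : ∀ p q : ℤ, w (-p) q = w p q) (hw2 : ∀ p q : ℤ, w p (-q) = w p q)
    (a b : ℕ → ℕ → ℝ) : Qf N w a b = Qf N w b a := by
  unfold Qf
  rw [sum4_comm]
  refine Finset.sum_congr rfl fun i _ => Finset.sum_congr rfl fun j _ =>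
    Finset.sum_congr rfl fun k _ => Finset.sum_congr rfl fun l _ => ?_
  have h1 : ((k : ℤ) - (i : ℤ)) = -((i : ℤ) - (k : ℤ)) := by ring
  have h2 : ((l : ℤ) - (j : ℤ)) = -((j : ℤ) - (l : ℤ)) := by ring
  rw [h1, h2, hw1, hw2]
  ring

lemma Qf_expand {N : ℕ} {w : ℤ → ℤ → ℝ} (a b : ℕ → ℕ → ℝ) :
    Qf N w b b = Qf N w a a + Qf N w a (fun i j => b i j - a i j)
      + Qf N w (fun i j => b i j - a i j) a
      + Qf N w (fun i j => b i j - a i j) (fun i j => b i j - a i j) := by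
  unfold Qf
  simp only [← Finset.sum_add_distrib]
  refine sum4_congr fun i j k l _ _ _ _ _ _ _ _ => ?_
  ring

lemma Qf_right_add {N : ℕ} {w : ℤ → ℤ → ℝ} (a b c : ℕ → ℕ → ℝ) :
    Qf N w a (fun i j => b i j + c i j) = Qf N w a b + Qf N w a c := by
  unfold Qf
  simp only [← Finset.sum_add_distrib]
  refine sum4_congr fun i j k l _ _ _ _ _ _ _ _ => ?_
  ring

lemma Qf_right_smul {N : ℕ} {w : ℤ → ℤ → ℝ} (t : ℝ) (a b : ℕ → ℕ → ℝ) :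
    Qf N w a (fun i j => t * b i j) = t * Qf N w a b := by
  unfold Qf
  simp only [Finset.mul_sum]
  refine sum4_congr fun i j k l _ _ _ _ _ _ _ _ => ?_
  ring
lemma pos1d (N : ℕ) (hN : 2 ≤ N) {dx dt : ℝ} (hdx : 0 < dx) (hdt : 0 < dt)
    (ρ ρ' u F : ℕ → ℝ)
    (hρ : ∀ i, 1 ≤ i → i ≤ N → 0 ≤ ρ i)
    (hF : ∀ i, 1 ≤ i → i ≤ N - 1 →
      F i = recE N dx ρ i * pospart (u i) + recW N dx ρ (i + 1) * negpart (u i))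
    (hF0 : F 0 = 0) (hFN : F N = 0)
    (hCFL : ∀ i, 1 ≤ i → i ≤ N - 1 →
      2 * dt * max (pospart (u i)) (-negpart (u i)) ≤ dx)
    (hupd : ∀ i, 1 ≤ i → i ≤ N → ρ' i = ρ i - dt / dx * (F i - F (i - 1))) :
    ∀ i, 1 ≤ i → i ≤ N → 0 ≤ ρ' i := by
  have hlam : 0 < dt / dx := div_pos hdt hdx
  have hCFLp : ∀ i, 1 ≤ i → i ≤ N - 1 → dt / dx * pospart (u i) ≤ 1 / 2 := by
    intro i hi1 hi2
    have h := hCFL i hi1 hi2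
    have h2 : pospart (u i) ≤ max (pospart (u i)) (-negpart (u i)) := le_max_left _ _
    rw [div_mul_eq_mul_div, div_le_iff₀ hdx]
    nlinarith
  have hCFLm : ∀ i, 1 ≤ i → i ≤ N - 1 → dt / dx * (-negpart (u i)) ≤ 1 / 2 := by
    intro i hi1 hi2
    have h := hCFL i hi1 hi2
    have h2 : -negpart (u i) ≤ max (pospart (u i)) (-negpart (u i)) := le_max_right _ _
    have h3 : 0 ≤ -negpart (u i) := by simpa using negpart_nonpos (u i)
    rw [div_mul_eq_mul_div, div_le_iff₀ hdx]
    nlinarith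
  have hE : ∀ i, 1 ≤ i → i ≤ N → 0 ≤ recE N dx ρ i := fun i h1 h2 =>
    recE_nonneg N hdx ρ i (hρ i h1 h2) (fun ha hb => hρ (i + 1) (by omega) (by omega))
  have hW : ∀ i, 1 ≤ i → i ≤ N → 0 ≤ recW N dx ρ i := fun i h1 h2 =>
    recW_nonneg N hdx ρ i (hρ i h1 h2) (fun ha hb => hρ (i - 1) (by omega) (by omega))
  have hmn : ∀ i, dt / dx * negpart (u i) ≤ 0 := fun i =>
    mul_nonpos_of_nonneg_of_nonpos hlam.le (negpart_nonpos _)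
  have hpn : ∀ i, 0 ≤ dt / dx * pospart (u i) := fun i =>
    mul_nonneg hlam.le (pospart_nonneg _)
  intro i hi1 hi2
  rcases show i = 1 ∨ i = N ∨ (2 ≤ i ∧ i ≤ N - 1) by omega with rfl | hiN | hint
  · -- left boundary cell
    rw [hupd 1 le_rfl (by omega)]
    have hF1 := hF 1 le_rfl (by omega)
    have hsum := recE_add_recW N dx ρ 1
    have hFz : F (1 - 1) = 0 := by simpa using hF0
    rw [hFz, hF1]
    have a1 : 0 ≤ recE N dx ρ 1 * (1 / 2 - dt / dx * pospart (u 1)) :=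
      mul_nonneg (hE 1 le_rfl (by omega)) (by linarith [hCFLp 1 le_rfl (by omega)])
    have a2 : 0 ≤ recW N dx ρ 1 := hW 1 le_rfl (by omega)
    have a3 : 0 ≤ recW N dx ρ 2 * (-(dt / dx * negpart (u 1))) :=
      mul_nonneg (hW 2 (by omega) (by omega)) (by linarith [hmn 1])
    nlinarith [a1, a2, a3]
  · -- right boundary cell
    obtain ⟨m, rfl⟩ : ∃ m, N = m + 1 := ⟨N - 1, by omega⟩
    subst hiN
    rw [hupd (m + 1) (by omega) le_rfl, hFN]
    have hm1 : (1 : ℕ) ≤ m := by omega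
    have hFm := hF m hm1 (by omega)
    have hsum := recE_add_recW (m + 1) dx ρ (m + 1)
    have hidx : m + 1 - 1 = m := by omega
    rw [hidx, hFm]
    have a1 : 0 ≤ recW (m + 1) dx ρ (m + 1) * (1 / 2 + dt / dx * negpart (u m)) := by
      apply mul_nonneg (hW (m + 1) (by omega) le_rfl)
      have := hCFLm m hm1 (by omega)
      linarith
    have a2 : 0 ≤ recE (m + 1) dx ρ (m + 1) := hE (m + 1) (by omega) le_rfl
    have a3 : 0 ≤ recE (m + 1) dx ρ m * (dt / dx * pospart (u m)) :=
      mul_nonneg (hE m hm1 (by omega)) (hpn m)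
    nlinarith [a1, a2, a3]
  · -- interior cell
    obtain ⟨m, rfl⟩ : ∃ m, i = m + 1 := ⟨i - 1, by omega⟩
    have hm1 : (1 : ℕ) ≤ m := by omega
    have hmN : m ≤ N - 1 := by omega
    have hm1N : m + 1 ≤ N - 1 := hint.2
    rw [hupd (m + 1) (by omega) (by omega)]
    have hidx : m + 1 - 1 = m := by omega
    rw [hidx, hF (m + 1) (by omega) hm1N, hF m hm1 hmN]
    have hsum := recE_add_recW N dx ρ (m + 1)
    have a1 : 0 ≤ recE N dx ρ (m + 1) * (1 / 2 - dt / dx * pospart (u (m + 1))) :=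
      mul_nonneg (hE (m + 1) (by omega) (by omega))
        (by linarith [hCFLp (m + 1) (by omega) hm1N])
    have a2 : 0 ≤ recW N dx ρ (m + 1) * (1 / 2 + dt / dx * negpart (u m)) :=
      mul_nonneg (hW (m + 1) (by omega) (by omega))
        (by linarith [hCFLm m hm1 hmN])
    have a3 : 0 ≤ recW N dx ρ (m + 1 + 1) * (-(dt / dx * negpart (u (m + 1)))) :=
      mul_nonneg (hW (m + 2) (by omega) (by omega)) (by linarith [hmn (m + 1)])
    have a4 : 0 ≤ recE N dx ρ m * (dt / dx * pospart (u m)) :=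
      mul_nonneg (hE m (by omega) (by omega)) (hpn m)
    nlinarith [a1, a2, a3, a4]
lemma step_dissipation (N : ℕ) (hN : 2 ≤ N) {dx dy dt : ℝ}
    (hdx : 0 < dx) (hdy : 0 < dy) (hdt : 0 < dt)
    (H : ℝ → ℝ) (hHconv : ConvexOn ℝ Set.univ H) (hHdiff : Differentiable ℝ H)
    (V : ℕ → ℕ → ℝ) (w : ℤ → ℤ → ℝ)
    (hw1 : ∀ p q : ℤ, w (-p) q = w p q) (hw2 : ∀ p q : ℤ, w p (-q) = w p q)
    (ρ0 ρ1 ρs ξ u F : ℕ → ℕ → ℝ)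
    (hξ : ∀ i j, 1 ≤ i → i ≤ N → 1 ≤ j → j ≤ N →
      ξ i j = deriv H (ρ1 i j) + V i j
        + dx * dy * ∑ k ∈ Finset.Icc 1 N, ∑ l ∈ Finset.Icc 1 N,
            w ((i : ℤ) - (k : ℤ)) ((j : ℤ) - (l : ℤ)) * ρs k l)
    (hu : ∀ i j, 1 ≤ i → i ≤ N - 1 → 1 ≤ j → j ≤ N →
      u i j = -(ξ (i + 1) j - ξ i j) / dx)
    (hF : ∀ i j, 1 ≤ i → i ≤ N - 1 → 1 ≤ j → j ≤ N →
      F i j = recE N dx (fun i' => ρ0 i' j) i * pospart (u i j)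
        + recW N dx (fun i' => ρ0 i' j) (i + 1) * negpart (u i j))
    (hF0 : ∀ j, 1 ≤ j → j ≤ N → F 0 j = 0)
    (hFN : ∀ j, 1 ≤ j → j ≤ N → F N j = 0)
    (hupd : ∀ i j, 1 ≤ i → i ≤ N → 1 ≤ j → j ≤ N →
      ρ1 i j = ρ0 i j - dt / dx * (F i j - F (i - 1) j))
    (hpos : ∀ i j, 1 ≤ i → i ≤ N → 1 ≤ j → j ≤ N → 0 ≤ ρ0 i j)
    (hCFL : ∀ i j, 1 ≤ i → i ≤ N - 1 → 1 ≤ j → j ≤ N →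
      2 * dt * max (pospart (u i j)) (-negpart (u i j)) ≤ dx)
    (hcase :
      (∀ i j, 1 ≤ i → i ≤ N → 1 ≤ j → j ≤ N → ρs i j = (ρ0 i j + ρ1 i j) / 2) ∨
      ((∀ i j, 1 ≤ i → i ≤ N → 1 ≤ j → j ≤ N → ρs i j = ρ0 i j) ∧ NegDefKer2 N w) ∨
      ((∀ i j, 1 ≤ i → i ≤ N → 1 ≤ j → j ≤ N → ρs i j = ρ1 i j) ∧ PosDefKer2 N w)) :
    (∀ i j, 1 ≤ i → i ≤ N → 1 ≤ j → j ≤ N → 0 ≤ ρ1 i j) ∧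
      Edisc2 N dx dy H V w ρ1 ≤ Edisc2 N dx dy H V w ρ0 := by
  have hpos1 : ∀ i j, 1 ≤ i → i ≤ N → 1 ≤ j → j ≤ N → 0 ≤ ρ1 i j := by
    intro i j hi1 hi2 hj1 hj2
    exact pos1d N hN hdx hdt (fun i' => ρ0 i' j) (fun i' => ρ1 i' j)
      (fun i' => u i' j) (fun i' => F i' j)
      (fun i' h1 h2 => hpos i' j h1 h2 hj1 hj2)
      (fun i' h1 h2 => hF i' j h1 h2 hj1 hj2)
      (hF0 j hj1 hj2) (hFN j hj1 hj2)
      (fun i' h1 h2 => hCFL i' j h1 h2 hj1 hj2)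
      (fun i' h1 h2 => hupd i' j h1 h2 hj1 hj2) i hi1 hi2
  refine ⟨hpos1, ?_⟩
  -- T1 : entropy/xi dissipation
  have T1 : ∑ i ∈ Finset.Icc 1 N, ∑ j ∈ Finset.Icc 1 N,
      ξ i j * (ρ1 i j - ρ0 i j) ≤ 0 := by
    rw [Finset.sum_comm]
    apply Finset.sum_nonpos
    intro j hj
    rw [Finset.mem_Icc] at hj
    have hinner : ∑ i ∈ Finset.Icc 1 N, ξ i j * (ρ1 i j - ρ0 i j)
        = -(dt / dx) * ∑ i ∈ Finset.Icc 1 N, ξ i j * (F i j - F (i - 1) j) := by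
      rw [Finset.mul_sum]
      refine Finset.sum_congr rfl fun i hi => ?_
      rw [Finset.mem_Icc] at hi
      rw [hupd i j hi.1 hi.2 hj.1 hj.2]
      ring
    rw [hinner]
    have hsbp : ∑ i ∈ Finset.Icc 1 N, ξ i j * (F i j - F (i - 1) j)
        = ∑ i ∈ Finset.Icc 1 (N - 1), (ξ i j - ξ (i + 1) j) * F i j :=
      sbp N (by omega) (fun i => ξ i j) (fun i => F i j)
        (hF0 j hj.1 hj.2) (hFN j hj.1 hj.2)
    rw [hsbp]
    apply mul_nonpos_of_nonpos_of_nonneg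
    · have : 0 < dt / dx := div_pos hdt hdx
      linarith
    · apply Finset.sum_nonneg
      intro i hi
      rw [Finset.mem_Icc] at hi
      have hui := hu i j hi.1 hi.2 hj.1 hj.2
      have hdiff : ξ i j - ξ (i + 1) j = dx * u i j := by
        rw [hui]; field_simp; ring
      rw [hdiff, hF i j hi.1 hi.2 hj.1 hj.2]
      have hE : 0 ≤ recE N dx (fun i' => ρ0 i' j) i :=
        recE_nonneg N hdx _ i (hpos i j hi.1 (by omega) hj.1 hj.2)
          (fun _ _ => hpos (i + 1) j (by omega) (by omega) hj.1 hj.2)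
      have hWr : 0 ≤ recW N dx (fun i' => ρ0 i' j) (i + 1) :=
        recW_nonneg N hdx _ (i + 1) (hpos (i + 1) j (by omega) (by omega) hj.1 hj.2)
          (fun _ _ => by
            have : i + 1 - 1 = i := by omega
            rw [this]; exact hpos i j hi.1 (by omega) hj.1 hj.2)
      calc (0:ℝ) ≤ dx * (recE N dx (fun i' => ρ0 i' j) i * (pospart (u i j) * pospart (u i j))
            + recW N dx (fun i' => ρ0 i' j) (i + 1) * (negpart (u i j) * negpart (u i j))) := by
            apply mul_nonneg hdx.le
            apply add_nonneg (mul_nonneg hE (mul_self_nonneg _)) (mul_nonneg hWr (mul_self_nonneg _))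
        _ = dx * u i j * (recE N dx (fun i' => ρ0 i' j) i * pospart (u i j)
            + recW N dx (fun i' => ρ0 i' j) (i + 1) * negpart (u i j)) := by
            rw [← pospart_mul_self, ← negpart_mul_self]; ring
  -- key1 : energy difference decomposition
  have key1 : Edisc2 N dx dy H V w ρ1 - Edisc2 N dx dy H V w ρ0
      = dx * dy * ((∑ i ∈ Finset.Icc 1 N, ∑ j ∈ Finset.Icc 1 N, (H (ρ1 i j) - H (ρ0 i j)))
        + (∑ i ∈ Finset.Icc 1 N, ∑ j ∈ Finset.Icc 1 N, V i j * (ρ1 i j - ρ0 i j))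
        + dx * dy / 2 * (Qf N w ρ1 ρ1 - Qf N w ρ0 ρ0)) := by
    unfold Edisc2 Qf
    simp only [mul_sub, Finset.sum_sub_distrib]
    ring
  -- key2 : xi sum decomposition
  have key2 : ∑ i ∈ Finset.Icc 1 N, ∑ j ∈ Finset.Icc 1 N, ξ i j * (ρ1 i j - ρ0 i j)
      = (∑ i ∈ Finset.Icc 1 N, ∑ j ∈ Finset.Icc 1 N, deriv H (ρ1 i j) * (ρ1 i j - ρ0 i j))
        + (∑ i ∈ Finset.Icc 1 N, ∑ j ∈ Finset.Icc 1 N, V i j * (ρ1 i j - ρ0 i j))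
        + dx * dy * Qf N w (fun i j => ρ1 i j - ρ0 i j) ρs := by
    have hterm : ∀ i ∈ Finset.Icc 1 N, ∀ j ∈ Finset.Icc 1 N,
        ξ i j * (ρ1 i j - ρ0 i j)
          = deriv H (ρ1 i j) * (ρ1 i j - ρ0 i j) + V i j * (ρ1 i j - ρ0 i j)
            + dx * dy * ∑ k ∈ Finset.Icc 1 N, ∑ l ∈ Finset.Icc 1 N,
                w ((i : ℤ) - (k : ℤ)) ((j : ℤ) - (l : ℤ)) * (ρ1 i j - ρ0 i j) * ρs k l := by
      intro i hi j hj
      rw [Finset.mem_Icc] at hi hj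
      rw [hξ i j hi.1 hi.2 hj.1 hj.2]
      have e : ∑ k ∈ Finset.Icc 1 N, ∑ l ∈ Finset.Icc 1 N,
          w ((i : ℤ) - (k : ℤ)) ((j : ℤ) - (l : ℤ)) * (ρ1 i j - ρ0 i j) * ρs k l
          = (∑ k ∈ Finset.Icc 1 N, ∑ l ∈ Finset.Icc 1 N,
              w ((i : ℤ) - (k : ℤ)) ((j : ℤ) - (l : ℤ)) * ρs k l) * (ρ1 i j - ρ0 i j) := by
        rw [Finset.sum_mul]
        refine Finset.sum_congr rfl fun k _ => ?_
        rw [Finset.sum_mul]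
        refine Finset.sum_congr rfl fun l _ => ?_
        ring
      rw [e]
      ring
    calc ∑ i ∈ Finset.Icc 1 N, ∑ j ∈ Finset.Icc 1 N, ξ i j * (ρ1 i j - ρ0 i j)
        = ∑ i ∈ Finset.Icc 1 N, ∑ j ∈ Finset.Icc 1 N,
            (deriv H (ρ1 i j) * (ρ1 i j - ρ0 i j) + V i j * (ρ1 i j - ρ0 i j)
              + dx * dy * ∑ k ∈ Finset.Icc 1 N, ∑ l ∈ Finset.Icc 1 N,
                  w ((i : ℤ) - (k : ℤ)) ((j : ℤ) - (l : ℤ)) * (ρ1 i j - ρ0 i j) * ρs k l) :=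
          Finset.sum_congr rfl fun i hi => Finset.sum_congr rfl fun j hj => hterm i hi j hj
      _ = _ := by
          simp only [Finset.sum_add_distrib, Finset.mul_sum]
          unfold Qf
          simp only [Finset.mul_sum]
    -- end key2
  -- T2 : convexity
  have T2 : ∑ i ∈ Finset.Icc 1 N, ∑ j ∈ Finset.Icc 1 N,
      (H (ρ1 i j) - H (ρ0 i j) - deriv H (ρ1 i j) * (ρ1 i j - ρ0 i j)) ≤ 0 := by
    apply Finset.sum_nonpos
    intro i _
    apply Finset.sum_nonpos
    intro j _
    have := convex_tangent hHconv hHdiff (ρ0 i j) (ρ1 i j)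
    linarith
  -- T3 : interaction term
  have T3 : dx * dy / 2 * (Qf N w ρ1 ρ1 - Qf N w ρ0 ρ0)
      - dx * dy * Qf N w (fun i j => ρ1 i j - ρ0 i j) ρs ≤ 0 := by
    have hex : Qf N w ρ1 ρ1 = Qf N w ρ0 ρ0
        + Qf N w ρ0 (fun i j => ρ1 i j - ρ0 i j)
        + Qf N w (fun i j => ρ1 i j - ρ0 i j) ρ0
        + Qf N w (fun i j => ρ1 i j - ρ0 i j) (fun i j => ρ1 i j - ρ0 i j) :=
      Qf_expand ρ0 ρ1
    have hsy : Qf N w ρ0 (fun i j => ρ1 i j - ρ0 i j)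
        = Qf N w (fun i j => ρ1 i j - ρ0 i j) ρ0 := Qf_symm hw1 hw2 _ _
    rcases hcase with hc | ⟨hc, hneg⟩ | ⟨hc, hposdef⟩
    · have hcongr : Qf N w (fun i j => ρ1 i j - ρ0 i j) ρs
          = Qf N w (fun i j => ρ1 i j - ρ0 i j)
              (fun i j => ρ0 i j + (1/2) * (ρ1 i j - ρ0 i j)) := by
        apply Qf_congr (fun _ _ _ _ _ _ => rfl)
        intro i j h1 h2 h3 h4
        rw [hc i j h1 h2 h3 h4]; ring
      rw [hcongr, Qf_right_add, Qf_right_smul] at *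
      rw [hex, hsy]
      ring_nf
      linarith [le_refl (0:ℝ)]
    · have hcongr : Qf N w (fun i j => ρ1 i j - ρ0 i j) ρs
          = Qf N w (fun i j => ρ1 i j - ρ0 i j) ρ0 :=
        Qf_congr (fun _ _ _ _ _ _ => rfl) hc
      have hQdd : Qf N w (fun i j => ρ1 i j - ρ0 i j) (fun i j => ρ1 i j - ρ0 i j) ≤ 0 := by
        have := hneg ρ1 ρ0 hpos1 hpos
        simpa [Qf] using this
      rw [hcongr, hex, hsy]
      nlinarith [mul_pos hdx hdy]
    · have hcongr : Qf N w (fun i j => ρ1 i j - ρ0 i j) ρs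
          = Qf N w (fun i j => ρ1 i j - ρ0 i j)
              (fun i j => ρ0 i j + (ρ1 i j - ρ0 i j)) := by
        apply Qf_congr (fun _ _ _ _ _ _ => rfl)
        intro i j h1 h2 h3 h4
        rw [hc i j h1 h2 h3 h4]; ring
      have hQdd : 0 ≤ Qf N w (fun i j => ρ1 i j - ρ0 i j) (fun i j => ρ1 i j - ρ0 i j) := by
        have := hposdef ρ1 ρ0 hpos1 hpos
        simpa [Qf] using this
      rw [hcongr, Qf_right_add, hex, hsy]
      have h1 : Qf N w (fun i j => ρ1 i j - ρ0 i j) (fun i j => (1:ℝ) * (ρ1 i j - ρ0 i j))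
          = Qf N w (fun i j => ρ1 i j - ρ0 i j) (fun i j => ρ1 i j - ρ0 i j) := by
        apply Qf_congr (fun _ _ _ _ _ _ => rfl) (fun _ _ _ _ _ _ => by ring)
      nlinarith [mul_pos hdx hdy]
  -- assemble
  have splitH : ∑ i ∈ Finset.Icc 1 N, ∑ j ∈ Finset.Icc 1 N,
      (H (ρ1 i j) - H (ρ0 i j) - deriv H (ρ1 i j) * (ρ1 i j - ρ0 i j))
      = (∑ i ∈ Finset.Icc 1 N, ∑ j ∈ Finset.Icc 1 N, (H (ρ1 i j) - H (ρ0 i j)))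
        - ∑ i ∈ Finset.Icc 1 N, ∑ j ∈ Finset.Icc 1 N,
            deriv H (ρ1 i j) * (ρ1 i j - ρ0 i j) := by
    simp only [Finset.sum_sub_distrib]
  have hEdiff : Edisc2 N dx dy H V w ρ1 - Edisc2 N dx dy H V w ρ0
      = dx * dy * ((∑ i ∈ Finset.Icc 1 N, ∑ j ∈ Finset.Icc 1 N, ξ i j * (ρ1 i j - ρ0 i j))
        + (∑ i ∈ Finset.Icc 1 N, ∑ j ∈ Finset.Icc 1 N,
            (H (ρ1 i j) - H (ρ0 i j) - deriv H (ρ1 i j) * (ρ1 i j - ρ0 i j)))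
        + (dx * dy / 2 * (Qf N w ρ1 ρ1 - Qf N w ρ0 ρ0)
            - dx * dy * Qf N w (fun i j => ρ1 i j - ρ0 i j) ρs)) := by
    rw [key1, key2, splitH]
    ring
  have hbr : (∑ i ∈ Finset.Icc 1 N, ∑ j ∈ Finset.Icc 1 N, ξ i j * (ρ1 i j - ρ0 i j))
        + (∑ i ∈ Finset.Icc 1 N, ∑ j ∈ Finset.Icc 1 N,
            (H (ρ1 i j) - H (ρ0 i j) - deriv H (ρ1 i j) * (ρ1 i j - ρ0 i j)))
        + (dx * dy / 2 * (Qf N w ρ1 ρ1 - Qf N w ρ0 ρ0)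
            - dx * dy * Qf N w (fun i j => ρ1 i j - ρ0 i j) ρs) ≤ 0 := by
    linarith
  have := mul_nonpos_of_nonneg_of_nonpos (le_of_lt (mul_pos hdx hdy)) hbr
  linarith [hEdiff ▸ this]
lemma Edisc2_transpose (N : ℕ) (dx dy : ℝ) (H : ℝ → ℝ) (V : ℕ → ℕ → ℝ)
    (w : ℤ → ℤ → ℝ) (ρ : ℕ → ℕ → ℝ) :
    Edisc2 N dy dx H (fun i j => V j i) (fun p q => w q p) (fun i j => ρ j i)
      = Edisc2 N dx dy H V w ρ := by
  unfold Edisc2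
  have h1 : ∑ i ∈ Icc 1 N, ∑ j ∈ Icc 1 N, H (ρ j i)
      = ∑ i ∈ Icc 1 N, ∑ j ∈ Icc 1 N, H (ρ i j) := Finset.sum_comm
  have h2 : ∑ i ∈ Icc 1 N, ∑ j ∈ Icc 1 N, V j i * ρ j i
      = ∑ i ∈ Icc 1 N, ∑ j ∈ Icc 1 N, V i j * ρ i j := Finset.sum_comm
  have h3 : (∑ i ∈ Icc 1 N, ∑ j ∈ Icc 1 N, ∑ k ∈ Icc 1 N, ∑ l ∈ Icc 1 N,
        w ((j : ℤ) - (l : ℤ)) ((i : ℤ) - (k : ℤ)) * ρ j i * ρ l k)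
      = ∑ i ∈ Icc 1 N, ∑ j ∈ Icc 1 N, ∑ k ∈ Icc 1 N, ∑ l ∈ Icc 1 N,
        w ((i : ℤ) - (k : ℤ)) ((j : ℤ) - (l : ℤ)) * ρ i j * ρ k l := by
    rw [sum4_swap_pairs]
  simp only []
  rw [h1, h2, h3]
  ring

lemma negdef_transpose {N : ℕ} {w : ℤ → ℤ → ℝ} (h : NegDefKer2 N w) :
    NegDefKer2 N (fun p q => w q p) := by
  intro a b ha hb
  have key := h (fun i j => a j i) (fun i j => b j i)
    (fun i j h1 h2 h3 h4 => ha j i h3 h4 h1 h2)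
    (fun i j h1 h2 h3 h4 => hb j i h3 h4 h1 h2)
  simp only [] at key ⊢
  calc (∑ i ∈ Icc 1 N, ∑ j ∈ Icc 1 N, ∑ k ∈ Icc 1 N, ∑ l ∈ Icc 1 N,
        w ((j : ℤ) - (l : ℤ)) ((i : ℤ) - (k : ℤ)) * (a i j - b i j) * (a k l - b k l))
      = ∑ i ∈ Icc 1 N, ∑ j ∈ Icc 1 N, ∑ k ∈ Icc 1 N, ∑ l ∈ Icc 1 N,
        w ((i : ℤ) - (k : ℤ)) ((j : ℤ) - (l : ℤ)) * (a j i - b j i) * (a l k - b l k) := by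
        rw [sum4_swap_pairs]
    _ ≤ 0 := key

lemma posdef_transpose {N : ℕ} {w : ℤ → ℤ → ℝ} (h : PosDefKer2 N w) :
    PosDefKer2 N (fun p q => w q p) := by
  intro a b ha hb
  have key := h (fun i j => a j i) (fun i j => b j i)
    (fun i j h1 h2 h3 h4 => ha j i h3 h4 h1 h2)
    (fun i j h1 h2 h3 h4 => hb j i h3 h4 h1 h2)
  simp only [] at key ⊢
  calc (0:ℝ) ≤ ∑ i ∈ Icc 1 N, ∑ j ∈ Icc 1 N, ∑ k ∈ Icc 1 N, ∑ l ∈ Icc 1 N,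
        w ((i : ℤ) - (k : ℤ)) ((j : ℤ) - (l : ℤ)) * (a j i - b j i) * (a l k - b l k) := key
    _ = ∑ i ∈ Icc 1 N, ∑ j ∈ Icc 1 N, ∑ k ∈ Icc 1 N, ∑ l ∈ Icc 1 N,
        w ((j : ℤ) - (l : ℤ)) ((i : ℤ) - (k : ℤ)) * (a i j - b i j) * (a k l - b k l) := by
        rw [sum4_swap_pairs]
lemma step_dissipation_y (N : ℕ) (hN : 2 ≤ N) {dx dy dt : ℝ}
    (hdx : 0 < dx) (hdy : 0 < dy) (hdt : 0 < dt)
    (H : ℝ → ℝ) (hHconv : ConvexOn ℝ Set.univ H) (hHdiff : Differentiable ℝ H)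
    (V : ℕ → ℕ → ℝ) (w : ℤ → ℤ → ℝ)
    (hw1 : ∀ p q : ℤ, w (-p) q = w p q) (hw2 : ∀ p q : ℤ, w p (-q) = w p q)
    (ρ0 ρ1 ρs ξ v G : ℕ → ℕ → ℝ)
    (hξ : ∀ i j, 1 ≤ i → i ≤ N → 1 ≤ j → j ≤ N →
      ξ i j = deriv H (ρ1 i j) + V i j
        + dx * dy * ∑ k ∈ Finset.Icc 1 N, ∑ l ∈ Finset.Icc 1 N,
            w ((i : ℤ) - (k : ℤ)) ((j : ℤ) - (l : ℤ)) * ρs k l)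
    (hv : ∀ i j, 1 ≤ i → i ≤ N → 1 ≤ j → j ≤ N - 1 →
      v i j = -(ξ i (j + 1) - ξ i j) / dy)
    (hG : ∀ i j, 1 ≤ i → i ≤ N → 1 ≤ j → j ≤ N - 1 →
      G i j = recE N dy (fun j' => ρ0 i j') j * pospart (v i j)
        + recW N dy (fun j' => ρ0 i j') (j + 1) * negpart (v i j))
    (hG0 : ∀ i, 1 ≤ i → i ≤ N → G i 0 = 0)
    (hGN : ∀ i, 1 ≤ i → i ≤ N → G i N = 0)
    (hupd : ∀ i j, 1 ≤ i → i ≤ N → 1 ≤ j → j ≤ N →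
      ρ1 i j = ρ0 i j - dt / dy * (G i j - G i (j - 1)))
    (hpos : ∀ i j, 1 ≤ i → i ≤ N → 1 ≤ j → j ≤ N → 0 ≤ ρ0 i j)
    (hCFL : ∀ i j, 1 ≤ i → i ≤ N → 1 ≤ j → j ≤ N - 1 →
      2 * dt * max (pospart (v i j)) (-negpart (v i j)) ≤ dy)
    (hcase :
      (∀ i j, 1 ≤ i → i ≤ N → 1 ≤ j → j ≤ N → ρs i j = (ρ0 i j + ρ1 i j) / 2) ∨
      ((∀ i j, 1 ≤ i → i ≤ N → 1 ≤ j → j ≤ N → ρs i j = ρ0 i j) ∧ NegDefKer2 N w) ∨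
      ((∀ i j, 1 ≤ i → i ≤ N → 1 ≤ j → j ≤ N → ρs i j = ρ1 i j) ∧ PosDefKer2 N w)) :
    (∀ i j, 1 ≤ i → i ≤ N → 1 ≤ j → j ≤ N → 0 ≤ ρ1 i j) ∧
      Edisc2 N dx dy H V w ρ1 ≤ Edisc2 N dx dy H V w ρ0 := by
  have hξ' : ∀ i j, 1 ≤ i → i ≤ N → 1 ≤ j → j ≤ N →
      ξ j i = deriv H (ρ1 j i) + V j i
        + dy * dx * ∑ k ∈ Finset.Icc 1 N, ∑ l ∈ Finset.Icc 1 N,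
            w ((j : ℤ) - (l : ℤ)) ((i : ℤ) - (k : ℤ)) * ρs l k := by
    intro i j hi1 hi2 hj1 hj2
    rw [hξ j i hj1 hj2 hi1 hi2]
    have e : (∑ k ∈ Finset.Icc 1 N, ∑ l ∈ Finset.Icc 1 N,
          w ((j : ℤ) - (l : ℤ)) ((i : ℤ) - (k : ℤ)) * ρs l k)
        = ∑ k ∈ Finset.Icc 1 N, ∑ l ∈ Finset.Icc 1 N,
          w ((j : ℤ) - (k : ℤ)) ((i : ℤ) - (l : ℤ)) * ρs k l := Finset.sum_comm
    rw [e]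
    ring
  have hres := step_dissipation N hN hdy hdx hdt H hHconv hHdiff
    (fun i j => V j i) (fun p q => w q p)
    (fun p q => hw2 q p) (fun p q => hw1 q p)
    (fun i j => ρ0 j i) (fun i j => ρ1 j i) (fun i j => ρs j i)
    (fun i j => ξ j i) (fun i j => v j i) (fun i j => G j i)
    (fun i j hi1 hi2 hj1 hj2 => hξ' i j hi1 hi2 hj1 hj2)
    (fun i j hi1 hi2 hj1 hj2 => hv j i hj1 hj2 hi1 hi2)
    (fun i j hi1 hi2 hj1 hj2 => hG j i hj1 hj2 hi1 hi2)
    (fun j hj1 hj2 => hG0 j hj1 hj2)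
    (fun j hj1 hj2 => hGN j hj1 hj2)
    (fun i j hi1 hi2 hj1 hj2 => hupd j i hj1 hj2 hi1 hi2)
    (fun i j hi1 hi2 hj1 hj2 => hpos j i hj1 hj2 hi1 hi2)
    (fun i j hi1 hi2 hj1 hj2 => hCFL j i hj1 hj2 hi1 hi2)
    (by
      rcases hcase with hc | ⟨hc, hker⟩ | ⟨hc, hker⟩
      · exact Or.inl (fun i j hi1 hi2 hj1 hj2 => hc j i hj1 hj2 hi1 hi2)
      · exact Or.inr (Or.inl ⟨fun i j hi1 hi2 hj1 hj2 => hc j i hj1 hj2 hi1 hi2,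
          negdef_transpose hker⟩)
      · exact Or.inr (Or.inr ⟨fun i j hi1 hi2 hj1 hj2 => hc j i hj1 hj2 hi1 hi2,
          posdef_transpose hker⟩))
  obtain ⟨hp, hE⟩ := hres
  refine ⟨fun i j hi1 hi2 hj1 hj2 => hp j i hj1 hj2 hi1 hi2, ?_⟩
  rw [Edisc2_transpose N dx dy H V w ρ1, Edisc2_transpose N dx dy H V w ρ0] at hE
  exact hE
/-- energy dissipation for the two-dimensional dimensionally-split scheme
S1 under the CFL conditions, for each of the three admissible choices of the convolution
variables `ρ**` and `ρ***`. -/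
theorem stmt_11 (N : ℕ) (hN : 2 ≤ N) (dx dy dt : ℝ)
    (hdx : 0 < dx) (hdy : 0 < dy) (hdt : 0 < dt)
    (H : ℝ → ℝ) (hHconv : ConvexOn ℝ Set.univ H) (hHdiff : Differentiable ℝ H)
    (V : ℕ → ℕ → ℝ) (w : ℤ → ℤ → ℝ)
    (hw1 : ∀ p q : ℤ, w (-p) q = w p q) (hw2 : ∀ p q : ℤ, w p (-q) = w p q)
    (ρn ρh ρn1 ρss ρsss ξh ξ1 u v F G : ℕ → ℕ → ℝ)
    -- Step 1: evolution in the x-direction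
    (hξh : ∀ i j, 1 ≤ i → i ≤ N → 1 ≤ j → j ≤ N →
      ξh i j = deriv H (ρh i j) + V i j
        + dx * dy * ∑ k ∈ Finset.Icc 1 N, ∑ l ∈ Finset.Icc 1 N,
            w ((i : ℤ) - (k : ℤ)) ((j : ℤ) - (l : ℤ)) * ρss k l)
    (hu : ∀ i j, 1 ≤ i → i ≤ N - 1 → 1 ≤ j → j ≤ N →
      u i j = -(ξh (i + 1) j - ξh i j) / dx)
    (hF : ∀ i j, 1 ≤ i → i ≤ N - 1 → 1 ≤ j → j ≤ N →
      F i j = recE N dx (fun i' => ρn i' j) i * pospart (u i j)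
        + recW N dx (fun i' => ρn i' j) (i + 1) * negpart (u i j))
    (hF0 : ∀ j, 1 ≤ j → j ≤ N → F 0 j = 0)
    (hFN : ∀ j, 1 ≤ j → j ≤ N → F N j = 0)
    (hupd1 : ∀ i j, 1 ≤ i → i ≤ N → 1 ≤ j → j ≤ N →
      ρh i j = ρn i j - dt / dx * (F i j - F (i - 1) j))
    -- Step 2: evolution in the y-direction
    (hξ1 : ∀ i j, 1 ≤ i → i ≤ N → 1 ≤ j → j ≤ N →
      ξ1 i j = deriv H (ρn1 i j) + V i j
        + dx * dy * ∑ k ∈ Finset.Icc 1 N, ∑ l ∈ Finset.Icc 1 N,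
            w ((i : ℤ) - (k : ℤ)) ((j : ℤ) - (l : ℤ)) * ρsss k l)
    (hv : ∀ i j, 1 ≤ i → i ≤ N → 1 ≤ j → j ≤ N - 1 →
      v i j = -(ξ1 i (j + 1) - ξ1 i j) / dy)
    (hG : ∀ i j, 1 ≤ i → i ≤ N → 1 ≤ j → j ≤ N - 1 →
      G i j = recE N dy (fun j' => ρh i j') j * pospart (v i j)
        + recW N dy (fun j' => ρh i j') (j + 1) * negpart (v i j))
    (hG0 : ∀ i, 1 ≤ i → i ≤ N → G i 0 = 0)
    (hGN : ∀ i, 1 ≤ i → i ≤ N → G i N = 0)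
    (hupd2 : ∀ i j, 1 ≤ i → i ≤ N → 1 ≤ j → j ≤ N →
      ρn1 i j = ρh i j - dt / dy * (G i j - G i (j - 1)))
    (hpos : ∀ i j, 1 ≤ i → i ≤ N → 1 ≤ j → j ≤ N → 0 ≤ ρn i j)
    (hCFLu : ∀ i j, 1 ≤ i → i ≤ N - 1 → 1 ≤ j → j ≤ N →
      2 * dt * max (pospart (u i j)) (-negpart (u i j)) ≤ dx)
    (hCFLv : ∀ i j, 1 ≤ i → i ≤ N → 1 ≤ j → j ≤ N - 1 →
      2 * dt * max (pospart (v i j)) (-negpart (v i j)) ≤ dy)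
    (hcase :
      ((∀ i j, 1 ≤ i → i ≤ N → 1 ≤ j → j ≤ N → ρss i j = (ρn i j + ρh i j) / 2) ∧
        (∀ i j, 1 ≤ i → i ≤ N → 1 ≤ j → j ≤ N → ρsss i j = (ρh i j + ρn1 i j) / 2)) ∨
      ((∀ i j, 1 ≤ i → i ≤ N → 1 ≤ j → j ≤ N → ρss i j = ρn i j) ∧
        (∀ i j, 1 ≤ i → i ≤ N → 1 ≤ j → j ≤ N → ρsss i j = ρh i j) ∧
        NegDefKer2 N w) ∨
      ((∀ i j, 1 ≤ i → i ≤ N → 1 ≤ j → j ≤ N → ρss i j = ρh i j) ∧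
        (∀ i j, 1 ≤ i → i ≤ N → 1 ≤ j → j ≤ N → ρsss i j = ρn1 i j) ∧
        PosDefKer2 N w)) :
    Edisc2 N dx dy H V w ρn1 ≤ Edisc2 N dx dy H V w ρn := by

  have hcase1 : (∀ i j, 1 ≤ i → i ≤ N → 1 ≤ j → j ≤ N → ρss i j = (ρn i j + ρh i j) / 2) ∨
      ((∀ i j, 1 ≤ i → i ≤ N → 1 ≤ j → j ≤ N → ρss i j = ρn i j) ∧ NegDefKer2 N w) ∨
      ((∀ i j, 1 ≤ i → i ≤ N → 1 ≤ j → j ≤ N → ρss i j = ρh i j) ∧ PosDefKer2 N w) := by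
    rcases hcase with ⟨h1, _⟩ | ⟨h1, _, hker⟩ | ⟨h1, _, hker⟩
    · exact Or.inl h1
    · exact Or.inr (Or.inl ⟨h1, hker⟩)
    · exact Or.inr (Or.inr ⟨h1, hker⟩)
  obtain ⟨hposh, hE1⟩ := step_dissipation N hN hdx hdy hdt H hHconv hHdiff V w hw1 hw2
    ρn ρh ρss ξh u F hξh hu hF hF0 hFN hupd1 hpos hCFLu hcase1
  have hcase2 : (∀ i j, 1 ≤ i → i ≤ N → 1 ≤ j → j ≤ N → ρsss i j = (ρh i j + ρn1 i j) / 2) ∨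
      ((∀ i j, 1 ≤ i → i ≤ N → 1 ≤ j → j ≤ N → ρsss i j = ρh i j) ∧ NegDefKer2 N w) ∨
      ((∀ i j, 1 ≤ i → i ≤ N → 1 ≤ j → j ≤ N → ρsss i j = ρn1 i j) ∧ PosDefKer2 N w) := by
    rcases hcase with ⟨_, h2⟩ | ⟨_, h2, hker⟩ | ⟨_, h2, hker⟩
    · exact Or.inl h2
    · exact Or.inr (Or.inl ⟨h2, hker⟩)
    · exact Or.inr (Or.inr ⟨h2, hker⟩)
  obtain ⟨_, hE2⟩ := step_dissipation_y N hN hdx hdy hdt H hHconv hHdiff V w hw1 hw2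
    ρh ρn1 ρsss ξ1 v G hξ1 hv hG hG0 hGN hupd2 hposh hCFLv hcase2
  exact le_trans hE2 hE1
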